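/- If (u₁, v₁) and (u₂, v₂) are two F-Luce representations of the same strictly positive probabilistic choice rule ρ on all frames including ∅ and all singletons, then there exists α > 0 with u₁ = α·u₂ and v₁ = α·v₂. -/

import Mathlib

open Finset

/-- Uniqueness of F-Luce: two representations of the same strictly positive
choice rule on a domain containing the empty frame and all singleton frames
coincide up to a positive scaling factor. -/
theorem fLuce_uniqueness {X : Type*} [Fintype X] [DecidableEq X]
    (hX : 2 ≤ Fintype.card X)
    (ρ : X → Finset X → ℝ) (hpos : ∀ (x : X) (F : Finset X), 0 < ρ x F)
    (u₁ v₁ u₂ v₂ : X → ℝ)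
    (hu₁ : ∀ x, 0 < u₁ x) (hv₁ : ∀ x, 0 ≤ v₁ x)
    (hu₂ : ∀ x, 0 < u₂ x) (hv₂ : ∀ x, 0 ≤ v₂ x)
    (h₁ : ∀ (F : Finset X), F.card ≤ 1 → ∀ x : X,
      ρ x F = (u₁ x + if x ∈ F then v₁ x else 0) / ((∑ z, u₁ z) + ∑ z ∈ F, v₁ z))
    (h₂ : ∀ (F : Finset X), F.card ≤ 1 → ∀ x : X,
      ρ x F = (u₂ x + if x ∈ F then v₂ x else 0) / ((∑ z, u₂ z) + ∑ z ∈ F, v₂ z)) :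
    ∃ α : ℝ, 0 < α ∧ (∀ x, u₁ x = α * u₂ x) ∧ (∀ x, v₁ x = α * v₂ x) := by
  set U₁ : ℝ := ∑ z, u₁ z with hU₁
  set U₂ : ℝ := ∑ z, u₂ z with hU₂
  have : Nonempty X := Fintype.card_pos_iff.mp (by omega)
  have hne : (Finset.univ : Finset X).Nonempty := univ_nonempty
  have hU₁pos : 0 < U₁ := Finset.sum_pos (fun z _ => hu₁ z) hne
  have hU₂pos : 0 < U₂ := Finset.sum_pos (fun z _ => hu₂ z) hne
  set α : ℝ := U₁ / U₂ with hα
  have hαpos : 0 < α := div_pos hU₁pos hU₂pos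
  -- empty frame gives u₁ = α u₂
  have hu : ∀ x, u₁ x = α * u₂ x := by
    intro x
    have e1 := h₁ ∅ (by simp) x
    have e2 := h₂ ∅ (by simp) x
    simp only [Finset.notMem_empty, if_false, Finset.sum_empty, add_zero] at e1 e2
    have := e1 ▸ e2  -- u₁ x / U₁ = u₂ x / U₂
    have hkey : u₁ x / U₁ = u₂ x / U₂ := by rw [← e1, ← e2]
    rw [hα]; field_simp
    field_simp at hkey
    linarith [hkey]
  constructor
  · constructor
    · exact hαpos
    constructor
    · exact hu
    · intro y
      obtain ⟨x, hxy⟩ := Fintype.exists_ne_of_one_lt_card hX y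
      have hcard : ({y} : Finset X).card ≤ 1 := by simp
      have e1 := h₁ {y} hcard x
      have e2 := h₂ {y} hcard x
      have hxmem : x ∉ ({y} : Finset X) := by simp [hxy]
      simp only [hxmem, if_false, add_zero, Finset.sum_singleton] at e1 e2
      have hd₁ : (0:ℝ) < U₁ + v₁ y := by linarith [hv₁ y]
      have hd₂ : (0:ℝ) < U₂ + v₂ y := by linarith [hv₂ y]
      have hkey : u₁ x / (U₁ + v₁ y) = u₂ x / (U₂ + v₂ y) := by rw [← e1, ← e2]
      have hux := hu x
      rw [hux] at hkey
      have hu₂x := hu₂ x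
      rw [div_eq_div_iff hd₁.ne' hd₂.ne'] at hkey
      -- α * u₂ x * (U₂ + v₂ y) = u₂ x * (U₁ + v₁ y)
      have h3 : α * (U₂ + v₂ y) = U₁ + v₁ y := by
        have := mul_left_cancel₀ hu₂x.ne' (by ring_nf; ring_nf at hkey; linarith [hkey] : u₂ x * (α * (U₂ + v₂ y)) = u₂ x * (U₁ + v₁ y))
        exact this
      have hαU : α * U₂ = U₁ := by rw [hα]; exact div_mul_cancel₀ U₁ hU₂pos.ne'
      nlinarith [h3, hαU]
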